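/- Let X = C_b([0,∞)) with the supremum norm and pointwise order, and let T be the multiplication operator (Tf)(ω) = (1 − e^{−ω}) f(ω). Then T is positive, (Tf)(s) < f(s) for every nonzero f ≥ 0 and every s > 0 with f(s) > 0 — in particular Tf ≱ f for every nonzero f ≥ 0 — yet ‖T^k‖ = 1 for all k ≥ 0, so T is not uniformly exponentially stable. -/

import Mathlib

open Real

/-- On `X = C_b([0,∞))`, the multiplication operator
`(Tf)(ω) = (1 − e^{−ω}) f(ω)` is positive, satisfies `(Tf)(s) < f(s)` whenever
`f ≥ 0` and `f(s) > 0` with `s > 0`, hence `Tf ≱ f` for every nonzero `f ≥ 0`,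
but `‖T^k‖ = 1` for every `k`, so `T` is not uniformly exponentially stable. -/
theorem multiplication_operator_small_gain_not_stable
    (T : BoundedContinuousFunction (Set.Ici (0 : ℝ)) ℝ →L[ℝ]
         BoundedContinuousFunction (Set.Ici (0 : ℝ)) ℝ)
    (hT : ∀ (f : BoundedContinuousFunction (Set.Ici (0 : ℝ)) ℝ)
        (ω : Set.Ici (0 : ℝ)), T f ω = (1 - exp (-ω.val)) * f ω) :
    (∀ f : BoundedContinuousFunction (Set.Ici (0 : ℝ)) ℝ,
        (∀ ω, 0 ≤ f ω) → ∀ ω, 0 ≤ T f ω) ∧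
    (∀ f : BoundedContinuousFunction (Set.Ici (0 : ℝ)) ℝ,
        (∀ ω, 0 ≤ f ω) → ∀ s : Set.Ici (0 : ℝ), 0 < s.val → 0 < f s →
          T f s < f s) ∧
    (∀ f : BoundedContinuousFunction (Set.Ici (0 : ℝ)) ℝ,
        (∀ ω, 0 ≤ f ω) → f ≠ 0 → ¬ ∀ ω, f ω ≤ T f ω) ∧
    (∀ k : ℕ, ‖T ^ k‖ = 1) := by
  haveI : Nonempty (Set.Ici (0 : ℝ)) := ⟨⟨0, Set.mem_Ici.mpr le_rfl⟩⟩
  -- basic facts about the multiplier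
  have hfac_nonneg : ∀ ω : Set.Ici (0 : ℝ), 0 ≤ 1 - exp (-ω.val) := by
    intro ω
    have : exp (-ω.val) ≤ 1 := exp_le_one_iff.mpr (by linarith [Set.mem_Ici.mp ω.2])
    linarith
  have hfac_lt_one : ∀ ω : Set.Ici (0 : ℝ), 1 - exp (-ω.val) < 1 := by
    intro ω
    have : 0 < exp (-ω.val) := exp_pos _
    linarith
  -- pointwise formula for powers
  have hpow : ∀ (k : ℕ) (f : BoundedContinuousFunction (Set.Ici (0 : ℝ)) ℝ)
      (ω : Set.Ici (0 : ℝ)), (T ^ k) f ω = (1 - exp (-ω.val)) ^ k * f ω := by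
    intro k
    induction k with
    | zero => intro f ω; simp
    | succ n ih =>
      intro f ω
      have : (T ^ (n + 1)) f = (T ^ n) (T f) := by
        rw [pow_succ]; rfl
      rw [this, ih (T f) ω, hT f ω, pow_succ]
      ring
  refine ⟨?_, ?_, ?_, ?_⟩
  · intro f hf ω
    rw [hT f ω]
    exact mul_nonneg (hfac_nonneg ω) (hf ω)
  · intro f hf s hs hfs
    rw [hT f s]
    have h1 : exp (-s.val) > 0 := exp_pos _
    nlinarith
  · intro f hf hne h
    obtain ⟨ω, hω⟩ : ∃ ω, f ω ≠ 0 := by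
      by_contra hc
      push_neg at hc
      exact hne (BoundedContinuousFunction.ext fun ω => by simp [hc ω])
    have hfω : 0 < f ω := lt_of_le_of_ne (hf ω) (Ne.symm hω)
    have := h ω
    rw [hT f ω] at this
    nlinarith [hfac_lt_one ω, exp_pos (-ω.val)]
  · intro k
    have hupper : ‖T ^ k‖ ≤ 1 := by
      apply ContinuousLinearMap.opNorm_le_bound _ zero_le_one
      intro f
      rw [one_mul]
      apply BoundedContinuousFunction.norm_le (norm_nonneg f) |>.mpr
      intro ω
      rw [hpow k f ω]
      calc ‖(1 - exp (-ω.val)) ^ k * f ω‖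
          = |(1 - exp (-ω.val)) ^ k| * ‖f ω‖ := by
            rw [norm_mul]; rfl
        _ ≤ 1 * ‖f‖ := by
            apply mul_le_mul _ (BoundedContinuousFunction.norm_coe_le_norm f ω)
              (norm_nonneg _) zero_le_one
            rw [abs_pow]
            apply pow_le_one₀ (abs_nonneg _)
            rw [abs_of_nonneg (hfac_nonneg ω)]
            linarith [hfac_lt_one ω]
        _ = ‖f‖ := one_mul _
    have hlower : 1 ≤ ‖T ^ k‖ := by
      by_contra hc
      push_neg at hc
      set c := ‖T ^ k‖ with hcdef
      have hc0 : 0 ≤ c := by rw [hcdef]; exact norm_nonneg (T ^ k)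
      set ε : ℝ := (1 - c) / (k + 1) with hε
      have hεpos : 0 < ε := by
        apply div_pos (by linarith) (by positivity)
      -- pick a large point
      set ω₀ : ℝ := max 0 (-Real.log ε + 1) with hω₀
      have hω₀0 : 0 ≤ ω₀ := le_max_left _ _
      set ω : Set.Ici (0 : ℝ) := ⟨ω₀, hω₀0⟩ with hωdef
      have hexp : exp (-ω₀) < ε := by
        have h1 : -Real.log ε + 1 ≤ ω₀ := le_max_right _ _
        have h2 : -ω₀ < Real.log ε := by linarith
        calc exp (-ω₀) < exp (Real.log ε) := exp_lt_exp.mpr h2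
          _ = ε := exp_log hεpos
      have hval : (T ^ k) (1 : BoundedContinuousFunction (Set.Ici (0 : ℝ)) ℝ) ω
          = (1 - exp (-ω₀)) ^ k := by
        rw [hpow k 1 ω]; simp; rfl
      have hle : (1 - exp (-ω₀)) ^ k ≤ c := by
        calc (1 - exp (-ω₀)) ^ k
            ≤ |(T ^ k) (1 : BoundedContinuousFunction (Set.Ici (0 : ℝ)) ℝ) ω| := by
              rw [hval]; exact le_abs_self _
          _ ≤ ‖(T ^ k) (1 : BoundedContinuousFunction (Set.Ici (0 : ℝ)) ℝ)‖ := by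
              exact BoundedContinuousFunction.norm_coe_le_norm ((T ^ k) 1) ω
          _ ≤ c * ‖(1 : BoundedContinuousFunction (Set.Ici (0 : ℝ)) ℝ)‖ :=
              ContinuousLinearMap.le_opNorm _ _
          _ = c := by rw [norm_one, mul_one]
      -- Bernoulli: (1 - x)^k ≥ 1 - k x
      have hbern : 1 + (k : ℝ) * (-exp (-ω₀)) ≤ (1 + (-exp (-ω₀))) ^ k := by
        apply one_add_mul_le_pow
        have : exp (-ω₀) ≤ 1 := exp_le_one_iff.mpr (by linarith)
        linarith
      have hkε : (k : ℝ) * exp (-ω₀) < 1 - c := by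
        calc (k : ℝ) * exp (-ω₀) ≤ (k : ℝ) * ε :=
              mul_le_mul_of_nonneg_left hexp.le (Nat.cast_nonneg k)
          _ = (k : ℝ) * ((1 - c) / (k + 1)) := by rw [hε]
          _ < 1 - c := by
              rw [div_eq_mul_inv]
              have hk1 : (0:ℝ) < (k:ℝ) + 1 := by positivity
              rw [mul_comm ((1:ℝ) - c), ← mul_assoc]
              have : (k : ℝ) * ((k:ℝ) + 1)⁻¹ < 1 := by
                rw [mul_inv_lt_iff₀ hk1]; linarith
              nlinarith
      have : c < c := by
        calc c < 1 - (k : ℝ) * exp (-ω₀) := by linarith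
          _ = 1 + (k : ℝ) * (-exp (-ω₀)) := by ring
          _ ≤ (1 + (-exp (-ω₀))) ^ k := hbern
          _ = (1 - exp (-ω₀)) ^ k := by ring_nf
          _ ≤ c := hle
      exact lt_irrefl c this
    linarith
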